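/- Let a_1, …, a_M be complex numbers, all distinct from a real variable y_0, let f(y_0) = ∏_{j=1}^{M} (y_0 − a_j), and set Σ_k(y_0) = ∑_{j=1}^{M} 1/(a_j − y_0)^k. Then for every integer l ≥ 0, the l-th derivative of √f (i.e. of f^{1/2}, on a domain where f is positive, taking the positive square root) satisfies d^l/dy_0^l ( f(y_0)^{1/2} ) = f(y_0)^{1/2} · L_l(Σ_1(y_0), …, Σ_l(y_0)), where L_l is the polynomial L_l(z_1,…,z_l) = ∑_{p_1+2p_2+…+l p_l = l} (−1)^{∑p_k} l! z_1^{p_1}⋯z_l^{p_l} / (2^{∑p_k} ∏ p_k! ∏ k^{p_k}). -/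

import Mathlib

open Finset

/-- The rescaled complete exponential Bell polynomial `L_l(z_1, …, z_l)` (real version). -/
noncomputable def LPoly (l : ℕ) (z : ℕ → ℝ) : ℝ :=
  ∑ p ∈ (Fintype.piFinset fun _ : Fin l => Finset.range (l + 1)) |>.filter
      (fun p => ∑ i : Fin l, ((i : ℕ) + 1) * p i = l),
    (-1 : ℝ) ^ (∑ i : Fin l, p i) * (Nat.factorial l : ℝ) *
      (∏ i : Fin l, z ((i : ℕ) + 1) ^ p i) /
      ((2 : ℝ) ^ (∑ i : Fin l, p i) *
        (∏ i : Fin l, ((Nat.factorial (p i) : ℝ))) *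
        ∏ i : Fin l, (((i : ℕ) : ℝ) + 1) ^ p i)

namespace Stmt11

variable {N : ℕ}

lemma prod_update_eq {M : Type*} [CommMonoid M] (g : Fin N → ℕ → M)
    (q : Fin N → ℕ) (j : Fin N) (v : ℕ) :
    ∏ i : Fin N, g i (Function.update q j v i)
      = g j v * ∏ i ∈ Finset.univ.erase j, g i (q i) := by
  rw [← Finset.mul_prod_erase Finset.univ (fun i => g i (Function.update q j v i))
    (Finset.mem_univ j), Function.update_self]
  exact congrArg _ (Finset.prod_congr rfl fun i hi => by
    rw [Function.update_of_ne (Finset.ne_of_mem_erase hi)])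

lemma sum_update_eq {M : Type*} [AddCommMonoid M] (g : Fin N → ℕ → M)
    (q : Fin N → ℕ) (j : Fin N) (v : ℕ) :
    ∑ i : Fin N, g i (Function.update q j v i)
      = g j v + ∑ i ∈ Finset.univ.erase j, g i (q i) := by
  rw [← Finset.add_sum_erase Finset.univ (fun i => g i (Function.update q j v i))
    (Finset.mem_univ j), Function.update_self]
  exact congrArg _ (Finset.sum_congr rfl fun i hi => by
    rw [Function.update_of_ne (Finset.ne_of_mem_erase hi)])

lemma prod_split_eq {M : Type*} [CommMonoid M] (g : Fin N → ℕ → M)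
    (q : Fin N → ℕ) (j : Fin N) :
    ∏ i : Fin N, g i (q i) = g j (q j) * ∏ i ∈ Finset.univ.erase j, g i (q i) :=
  (Finset.mul_prod_erase Finset.univ (fun i => g i (q i)) (Finset.mem_univ j)).symm

lemma sum_split_eq {M : Type*} [AddCommMonoid M] (g : Fin N → ℕ → M)
    (q : Fin N → ℕ) (j : Fin N) :
    ∑ i : Fin N, g i (q i) = g j (q j) + ∑ i ∈ Finset.univ.erase j, g i (q i) :=
  (Finset.add_sum_erase Finset.univ (fun i => g i (q i)) (Finset.mem_univ j)).symm

lemma prod_update2_eq {M : Type*} [CommMonoid M] (g : Fin N → ℕ → M)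
    (q : Fin N → ℕ) {j1 j2 : Fin N} (hne : j2 ≠ j1) (v1 v2 : ℕ) :
    ∏ i : Fin N, g i (Function.update (Function.update q j1 v1) j2 v2 i)
      = g j1 v1 * g j2 v2 * ∏ i ∈ (Finset.univ.erase j2).erase j1, g i (q i) := by
  rw [prod_update_eq, ← Finset.mul_prod_erase (Finset.univ.erase j2)
    (fun i => g i (Function.update q j1 v1 i)) (Finset.mem_erase.mpr ⟨hne.symm, Finset.mem_univ j1⟩),
    Function.update_self]
  have hc : ∏ i ∈ (Finset.univ.erase j2).erase j1, g i (Function.update q j1 v1 i)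
      = ∏ i ∈ (Finset.univ.erase j2).erase j1, g i (q i) :=
    Finset.prod_congr rfl fun i hi => by
      rw [Function.update_of_ne (Finset.ne_of_mem_erase hi)]
  rw [hc]
  exact (mul_left_comm _ _ _).trans (mul_assoc _ _ _).symm

lemma sum_update2_eq {M : Type*} [AddCommMonoid M] (g : Fin N → ℕ → M)
    (q : Fin N → ℕ) {j1 j2 : Fin N} (hne : j2 ≠ j1) (v1 v2 : ℕ) :
    ∑ i : Fin N, g i (Function.update (Function.update q j1 v1) j2 v2 i)
      = g j1 v1 + g j2 v2 + ∑ i ∈ (Finset.univ.erase j2).erase j1, g i (q i) := by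
  rw [sum_update_eq, ← Finset.add_sum_erase (Finset.univ.erase j2)
    (fun i => g i (Function.update q j1 v1 i)) (Finset.mem_erase.mpr ⟨hne.symm, Finset.mem_univ j1⟩),
    Function.update_self]
  have hc : ∑ i ∈ (Finset.univ.erase j2).erase j1, g i (Function.update q j1 v1 i)
      = ∑ i ∈ (Finset.univ.erase j2).erase j1, g i (q i) :=
    Finset.sum_congr rfl fun i hi => by
      rw [Function.update_of_ne (Finset.ne_of_mem_erase hi)]
  rw [hc]
  exact (add_left_comm _ _ _).trans (add_assoc _ _ _).symm

lemma prod_split2_eq {M : Type*} [CommMonoid M] (g : Fin N → ℕ → M)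
    (q : Fin N → ℕ) {j1 j2 : Fin N} (hne : j2 ≠ j1) :
    ∏ i : Fin N, g i (q i)
      = g j1 (q j1) * g j2 (q j2) * ∏ i ∈ (Finset.univ.erase j2).erase j1, g i (q i) := by
  have h : ∏ i : Fin N, g i (q i)
      = ∏ i : Fin N, g i (Function.update (Function.update q j1 (q j1)) j2 (q j2) i) := by
    apply Finset.prod_congr rfl
    intro i _
    by_cases h1 : i = j2
    · subst h1; rw [Function.update_self]
    · rw [Function.update_of_ne h1]
      by_cases h2 : i = j1
      · subst h2; rw [Function.update_self]
      · rw [Function.update_of_ne h2]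
  rw [h, prod_update2_eq g q hne]

lemma sum_split2_eq {M : Type*} [AddCommMonoid M] (g : Fin N → ℕ → M)
    (q : Fin N → ℕ) {j1 j2 : Fin N} (hne : j2 ≠ j1) :
    ∑ i : Fin N, g i (q i)
      = g j1 (q j1) + g j2 (q j2) + ∑ i ∈ (Finset.univ.erase j2).erase j1, g i (q i) := by
  have h : ∑ i : Fin N, g i (q i)
      = ∑ i : Fin N, g i (Function.update (Function.update q j1 (q j1)) j2 (q j2) i) := by
    apply Finset.sum_congr rfl
    intro i _
    by_cases h1 : i = j2
    · subst h1; rw [Function.update_self]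
    · rw [Function.update_of_ne h1]
      by_cases h2 : i = j1
      · subst h2; rw [Function.update_self]
      · rw [Function.update_of_ne h2]
  rw [h, sum_update2_eq g q hne]


/-- Index set: multiplicity vectors `p` (part `i+1` has multiplicity `p i`) of total weight `l`. -/
def PSet (N l : ℕ) : Finset (Fin N → ℕ) :=
  (Fintype.piFinset fun _ : Fin N => Finset.range (l + 1)).filter
    (fun p => ∑ i : Fin N, ((i : ℕ) + 1) * p i = l)

noncomputable def Cp {N : ℕ} (l : ℕ) (p : Fin N → ℕ) : ℝ :=
  (-1 : ℝ) ^ (∑ i : Fin N, p i) * (Nat.factorial l : ℝ) /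
    ((2 : ℝ) ^ (∑ i : Fin N, p i) * (∏ i : Fin N, ((Nat.factorial (p i) : ℝ))) *
      ∏ i : Fin N, (((i : ℕ) : ℝ) + 1) ^ p i)

noncomputable def mon {N : ℕ} (p : Fin N → ℕ) (z : ℕ → ℝ) : ℝ :=
  ∏ i : Fin N, z ((i : ℕ) + 1) ^ p i

noncomputable def LP (N l : ℕ) (z : ℕ → ℝ) : ℝ := ∑ p ∈ PSet N l, Cp l p * mon p z

lemma mem_PSet {N l : ℕ} {p : Fin N → ℕ} :
    p ∈ PSet N l ↔ ∑ i : Fin N, ((i : ℕ) + 1) * p i = l := by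
  constructor
  · exact fun h => (Finset.mem_filter.mp h).2
  · intro h
    refine Finset.mem_filter.mpr ⟨Fintype.mem_piFinset.mpr fun i => ?_, h⟩
    refine Finset.mem_range.mpr (Nat.lt_succ_of_le ?_)
    calc p i ≤ ((i : ℕ) + 1) * p i := Nat.le_mul_of_pos_left _ (Nat.succ_pos _)
    _ ≤ _ := h ▸ Finset.single_le_sum (f := fun i : Fin N => ((i : ℕ) + 1) * p i)
        (fun _ _ => Nat.zero_le _) (Finset.mem_univ i)

lemma PSet_zero {N l : ℕ} {p : Fin N → ℕ} (hp : p ∈ PSet N l) {i : Fin N}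
    (h : l < (i : ℕ) + 1) : p i = 0 := by
  by_contra hne
  have h1 : (i : ℕ) + 1 ≤ ((i : ℕ) + 1) * p i := Nat.le_mul_of_pos_right _ (Nat.pos_of_ne_zero hne)
  have h2 : ((i : ℕ) + 1) * p i ≤ l := (mem_PSet.mp hp) ▸
    Finset.single_le_sum (f := fun i : Fin N => ((i : ℕ) + 1) * p i)
      (fun _ _ => Nat.zero_le _) (Finset.mem_univ i)
  omega

lemma LPoly_eq_LP (l : ℕ) (z : ℕ → ℝ) : LPoly l z = LP l l z := by
  unfold LPoly LP PSet Cp mon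
  exact Finset.sum_congr rfl fun p _ => by ring

lemma LP_succ (N l : ℕ) (h : l ≤ N) (z : ℕ → ℝ) : LP (N + 1) l z = LP N l z := by
  unfold LP
  have hlast : ∀ p ∈ PSet (N+1) l, p (Fin.last N) = 0 := fun p hp =>
    PSet_zero hp (by simp; omega)
  refine Finset.sum_nbij' (i := fun p => p ∘ Fin.castSucc) (j := fun p => Fin.snoc p 0)
    ?_ ?_ ?_ ?_ ?_
  · intro p hp
    rw [mem_PSet]
    have := mem_PSet.mp hp
    rw [Fin.sum_univ_castSucc, hlast p hp] at this
    simpa using this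
  · intro p hp
    rw [mem_PSet]
    have := mem_PSet.mp hp
    rw [Fin.sum_univ_castSucc]
    simpa using this
  · intro p hp
    funext j
    refine Fin.lastCases ?_ ?_ j
    · simpa using (hlast p hp).symm
    · intro i; simp
  · intro p hp
    funext j; simp
  · intro p hp
    have h0 := hlast p hp
    simp only [Cp, mon, Fin.sum_univ_castSucc, Fin.prod_univ_castSucc, h0, Function.comp]
    norm_num

lemma LP_stable (N l : ℕ) (h : l ≤ N) (z : ℕ → ℝ) : LP N l z = LP l l z := by
  induction N with
  | zero => have : l = 0 := by omega
            subst this; rfl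
  | succ n ih =>
    rcases Nat.lt_or_ge l (n+1) with h' | h'
    · rw [LP_succ n l (by omega) z, ih (by omega)]
    · have : l = n + 1 := by omega
      subst this; rfl


noncomputable def Dalg (N l : ℕ) (z : ℕ → ℝ) : ℝ :=
  ∑ p ∈ PSet N l, Cp l p *
    ∑ i : Fin N, (∏ j ∈ Finset.univ.erase i, z ((j : ℕ) + 1) ^ p j) *
      ((p i : ℝ) * z ((i : ℕ) + 1) ^ (p i - 1) * ((((i : ℕ) : ℝ) + 1) * z ((i : ℕ) + 2)))

lemma partA (n l : ℕ) (z : ℕ → ℝ) :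
    ∑ p ∈ PSet (n+1) (l+1), ((p 0 : ℝ) / ((l : ℝ) + 1)) * (Cp (l+1) p * mon p z)
      = -(1/2) * z 1 * LP (n+1) l z := by
  rw [LP, Finset.mul_sum]
  rw [← Finset.sum_filter_of_ne (p := fun p => p 0 ≠ 0)
    (fun x _ hx => by
      intro h0
      apply hx
      rw [h0]
      norm_num)]
  refine Finset.sum_nbij' (i := fun p => Function.update p 0 (p 0 - 1))
    (j := fun q => Function.update q 0 (q 0 + 1)) ?_ ?_ ?_ ?_ ?_
  · intro p hp
    rw [Finset.mem_filter] at hp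
    obtain ⟨hp1, hp0⟩ := hp
    have hd := mem_PSet.mp hp1
    rw [sum_split_eq (fun (i : Fin (n+1)) v => ((i : ℕ)+1)*v) p 0] at hd
    rw [mem_PSet]
    have h2 := sum_update_eq (fun (i : Fin (n+1)) v => ((i : ℕ)+1)*v) p 0 (p 0 - 1)
    rw [h2]
    simp only [Fin.val_zero] at hd ⊢
    omega
  · intro q hq
    have hd := mem_PSet.mp hq
    rw [sum_split_eq (fun (i : Fin (n+1)) v => ((i : ℕ)+1)*v) q 0] at hd
    rw [Finset.mem_filter]
    constructor
    · rw [mem_PSet]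
      have h2 := sum_update_eq (fun (i : Fin (n+1)) v => ((i : ℕ)+1)*v) q 0 (q 0 + 1)
      rw [h2]
      simp only [Fin.val_zero] at hd ⊢
      omega
    · simp [Function.update_self]
  · intro p hp
    rw [Finset.mem_filter] at hp
    funext j
    by_cases hj : j = 0
    · subst hj; simp [Function.update_self]; omega
    · simp [Function.update_of_ne hj]
  · intro q hq
    funext j
    by_cases hj : j = 0
    · subst hj; simp [Function.update_self]
    · simp [Function.update_of_ne hj]
  · intro p hp
    rw [Finset.mem_filter] at hp
    obtain ⟨hp1, hp0⟩ := hp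
    obtain ⟨m, hm⟩ : ∃ m, p 0 = m + 1 := ⟨p 0 - 1, by omega⟩
    set W : ℕ := ∑ i ∈ Finset.univ.erase (0 : Fin (n+1)), p i with hW
    set R : ℝ := ∏ i ∈ Finset.univ.erase (0 : Fin (n+1)), z ((i : ℕ) + 1) ^ p i with hR
    set F : ℝ := ∏ i ∈ Finset.univ.erase (0 : Fin (n+1)), ((p i).factorial : ℝ) with hF
    set G : ℝ := ∏ i ∈ Finset.univ.erase (0 : Fin (n+1)), (((i : ℕ) : ℝ) + 1) ^ p i with hG
    have hFpos : 0 < F := Finset.prod_pos fun i _ => by positivity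
    have hGpos : 0 < G := Finset.prod_pos fun i _ => by positivity
    have hwp : ∑ i : Fin (n+1), p i = (m + 1) + W := by
      have := sum_split_eq (fun (_ : Fin (n+1)) v => v) p 0
      rw [this, hm]
    have hwq : ∑ i : Fin (n+1), Function.update p 0 (p 0 - 1) i = m + W := by
      have := sum_update_eq (fun (_ : Fin (n+1)) v => v) p 0 (p 0 - 1)
      rw [this, hm, Nat.add_sub_cancel, hW]
    have hmonp : mon p z = z 1 ^ (m + 1) * R := by
      rw [mon, prod_split_eq (fun (i : Fin (n+1)) v => z ((i : ℕ) + 1) ^ v) p 0]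
      simp [hm, hR]
    have hmonq : mon (Function.update p 0 (p 0 - 1)) z = z 1 ^ m * R := by
      rw [mon, prod_update_eq (fun (i : Fin (n+1)) v => z ((i : ℕ) + 1) ^ v) p 0]
      simp [hm, hR]
    have hfp : ∏ i : Fin (n+1), ((p i).factorial : ℝ) = ((m+1).factorial : ℝ) * F := by
      rw [prod_split_eq (fun (_ : Fin (n+1)) v => ((v.factorial : ℝ))) p 0]
      simp [hm, hF]
    have hfq : ∏ i : Fin (n+1), (((Function.update p 0 (p 0 - 1)) i).factorial : ℝ)
        = (m.factorial : ℝ) * F := by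
      rw [prod_update_eq (fun (_ : Fin (n+1)) v => ((v.factorial : ℝ))) p 0]
      simp [hm, hF]
    have hgp : ∏ i : Fin (n+1), (((i : ℕ) : ℝ) + 1) ^ p i = G := by
      rw [prod_split_eq (fun (i : Fin (n+1)) v => (((i : ℕ) : ℝ) + 1) ^ v) p 0]
      simp [hG]
    have hgq : ∏ i : Fin (n+1), (((i : ℕ) : ℝ) + 1) ^ (Function.update p 0 (p 0 - 1) i) = G := by
      rw [prod_update_eq (fun (i : Fin (n+1)) v => (((i : ℕ) : ℝ) + 1) ^ v) p 0]
      simp [hG]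
    rw [Cp, Cp, hwp, hwq, hmonp, hmonq, hfp, hfq, hgp, hgq, hm]
    have hl1 : ((l : ℝ) + 1) ≠ 0 := by positivity
    have hmf : (m.factorial : ℝ) ≠ 0 := by positivity
    have hlf : (l.factorial : ℝ) ≠ 0 := by positivity
    simp only [Nat.factorial_succ, pow_succ, pow_add]
    push_cast
    field_simp

lemma keyB (n l : ℕ) (h : l ≤ n) (z : ℕ → ℝ) (i : Fin n) :
    ∑ p ∈ PSet (n+1) (l+1),
        ((((i : ℕ) : ℝ) + 2) * (p i.succ : ℝ) / ((l : ℝ) + 1)) * (Cp (l+1) p * mon p z)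
      = ∑ p ∈ PSet (n+1) l,
        Cp l p * ((∏ j ∈ Finset.univ.erase i.castSucc, z ((j : ℕ) + 1) ^ p j) *
          ((p i.castSucc : ℝ) * z ((i.castSucc : ℕ) + 1) ^ (p i.castSucc - 1) *
            ((((i.castSucc : ℕ) : ℝ) + 1) * z ((i.castSucc : ℕ) + 2)))) := by
  have hne : i.castSucc ≠ i.succ := (Fin.castSucc_lt_succ (i := i)).ne
  rw [← Finset.sum_filter_of_ne (s := PSet (n+1) (l+1)) (p := fun p => p i.succ ≠ 0)
    (fun x _ hx h0 => hx (by simp [h0]))]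
  rw [← Finset.sum_filter_of_ne (s := PSet (n+1) l) (p := fun p => p i.castSucc ≠ 0)
    (fun x _ hx h0 => hx (by simp [h0]))]
  refine Finset.sum_nbij'
    (i := fun p => Function.update (Function.update p i.succ (p i.succ - 1)) i.castSucc
      (p i.castSucc + 1))
    (j := fun p => Function.update (Function.update p i.castSucc (p i.castSucc - 1)) i.succ
      (p i.succ + 1)) ?_ ?_ ?_ ?_ ?_
  · intro p hp
    rw [Finset.mem_filter] at hp
    obtain ⟨hp1, hp0⟩ := hp
    have hd := mem_PSet.mp hp1
    rw [sum_split2_eq (fun (j : Fin (n+1)) v => ((j : ℕ)+1)*v) p hne] at hd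
    rw [Finset.mem_filter]
    refine ⟨mem_PSet.mpr ?_, by simp⟩
    obtain ⟨k, hk⟩ : ∃ k, p i.succ = k + 1 := ⟨p i.succ - 1, by omega⟩
    have h2 := sum_update2_eq (fun (j : Fin (n+1)) v => ((j : ℕ)+1)*v) p hne
      (p i.succ - 1) (p i.castSucc + 1)
    rw [h2]
    simp only [Fin.val_succ, Fin.coe_castSucc, hk, Nat.add_sub_cancel] at hd ⊢
    ring_nf at hd ⊢
    omega
  · intro p hp
    rw [Finset.mem_filter] at hp
    obtain ⟨hp1, hp0⟩ := hp
    have hd := mem_PSet.mp hp1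
    rw [sum_split2_eq (fun (j : Fin (n+1)) v => ((j : ℕ)+1)*v) p hne] at hd
    rw [Finset.mem_filter]
    refine ⟨mem_PSet.mpr ?_, by simp⟩
    obtain ⟨k, hk⟩ : ∃ k, p i.castSucc = k + 1 := ⟨p i.castSucc - 1, by omega⟩
    have h2 := sum_update2_eq (fun (j : Fin (n+1)) v => ((j : ℕ)+1)*v) p hne.symm
      (p i.castSucc - 1) (p i.succ + 1)
    rw [h2]
    rw [Finset.erase_right_comm] at hd
    simp only [Fin.val_succ, Fin.coe_castSucc, hk, Nat.add_sub_cancel] at hd ⊢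
    ring_nf at hd ⊢
    omega
  · intro p hp
    rw [Finset.mem_filter] at hp
    obtain ⟨hp1, hp0⟩ := hp
    funext j
    rcases eq_or_ne j i.castSucc with rfl | h1
    · simp only [Function.update_self, Function.update_of_ne hne]
      omega
    · rcases eq_or_ne j i.succ with rfl | h2
      · simp only [Function.update_self, Function.update_of_ne (Ne.symm hne)]
        omega
      · simp only [Function.update_of_ne h1, Function.update_of_ne h2]
  · intro p hp
    rw [Finset.mem_filter] at hp
    obtain ⟨hp1, hp0⟩ := hp
    funext j
    rcases eq_or_ne j i.castSucc with rfl | h1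
    · simp only [Function.update_self, Function.update_of_ne hne]
      omega
    · rcases eq_or_ne j i.succ with rfl | h2
      · simp only [Function.update_self, Function.update_of_ne (Ne.symm hne)]
        omega
      · simp only [Function.update_of_ne h1, Function.update_of_ne h2]
  · intro p hp
    rw [Finset.mem_filter] at hp
    obtain ⟨hp1, hp0⟩ := hp
    obtain ⟨r, hr⟩ : ∃ r, p i.succ = r + 1 := ⟨p i.succ - 1, by omega⟩
    simp only [hr, Nat.add_sub_cancel]
    set Q := Function.update (Function.update p i.succ r) i.castSucc (p i.castSucc + 1) with hQ
    have hQic : Q i.castSucc = p i.castSucc + 1 := by rw [hQ, Function.update_self]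
    have hQis : Q i.succ = r := by
      rw [hQ, Function.update_of_ne hne.symm, Function.update_self]
    set ee := (Finset.univ.erase i.castSucc).erase i.succ with hee
    set W : ℕ := ∑ j ∈ ee, p j with hW
    set R : ℝ := ∏ j ∈ ee, z ((j : ℕ) + 1) ^ p j with hR
    set F : ℝ := ∏ j ∈ ee, ((p j).factorial : ℝ) with hF
    set G : ℝ := ∏ j ∈ ee, (((j : ℕ) : ℝ) + 1) ^ p j with hG
    have hFpos : 0 < F := Finset.prod_pos fun j _ => by positivity
    have hGpos : 0 < G := Finset.prod_pos fun j _ => by positivity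
    have hQee : ∀ j ∈ ee, Q j = p j := by
      intro j hj
      have hj1 : j ≠ i.succ := Finset.ne_of_mem_erase hj
      have hj2 : j ≠ i.castSucc := Finset.ne_of_mem_erase (Finset.mem_of_mem_erase hj)
      rw [hQ, Function.update_of_ne hj2, Function.update_of_ne hj1]
    -- p-side decompositions
    have hwp : ∑ j : Fin (n+1), p j = (r + 1) + p i.castSucc + W := by
      have := sum_split2_eq (fun (_ : Fin (n+1)) v => v) p hne
      rw [this, hr]
    have hmonp : mon p z = z ((i : ℕ) + 2) ^ (r + 1) * z ((i : ℕ) + 1) ^ p i.castSucc * R := by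
      rw [mon, prod_split2_eq (fun (j : Fin (n+1)) v => z ((j : ℕ) + 1) ^ v) p hne]
      simp only [Fin.val_succ, Fin.coe_castSucc, hr, hR]
      rfl
    have hfp : ∏ j : Fin (n+1), ((p j).factorial : ℝ)
        = ((r + 1).factorial : ℝ) * ((p i.castSucc).factorial : ℝ) * F := by
      rw [prod_split2_eq (fun (_ : Fin (n+1)) v => ((v.factorial : ℝ))) p hne]
      simp only [hr, hF]
      rfl
    have hgp : ∏ j : Fin (n+1), (((j : ℕ) : ℝ) + 1) ^ p j
        = (((i : ℕ) : ℝ) + 2) ^ (r + 1) * (((i : ℕ) : ℝ) + 1) ^ p i.castSucc * G := by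
      rw [prod_split2_eq (fun (j : Fin (n+1)) v => (((j : ℕ) : ℝ) + 1) ^ v) p hne]
      simp only [Fin.val_succ, Fin.coe_castSucc, hr, hG]
      push_cast
      ring
    -- Q-side decompositions
    have hwq : ∑ j : Fin (n+1), Q j = r + (p i.castSucc + 1) + W := by
      rw [hQ]
      have := sum_update2_eq (fun (_ : Fin (n+1)) v => v) p hne r (p i.castSucc + 1)
      rw [this]
    have hfq : ∏ j : Fin (n+1), ((Q j).factorial : ℝ)
        = (r.factorial : ℝ) * ((p i.castSucc + 1).factorial : ℝ) * F := by
      rw [hQ]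
      have := prod_update2_eq (fun (_ : Fin (n+1)) v => ((v.factorial : ℝ))) p hne r
        (p i.castSucc + 1)
      rw [this]
    have hgq : ∏ j : Fin (n+1), (((j : ℕ) : ℝ) + 1) ^ Q j
        = (((i : ℕ) : ℝ) + 2) ^ r * (((i : ℕ) : ℝ) + 1) ^ (p i.castSucc + 1) * G := by
      rw [hQ]
      have := prod_update2_eq (fun (j : Fin (n+1)) v => (((j : ℕ) : ℝ) + 1) ^ v) p hne r
        (p i.castSucc + 1)
      rw [this]
      simp only [Fin.val_succ, Fin.coe_castSucc, hG]
      push_cast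
      ring
    have hprodQ : ∏ j ∈ Finset.univ.erase i.castSucc, z ((j : ℕ) + 1) ^ Q j
        = z ((i : ℕ) + 2) ^ r * R := by
      rw [← Finset.mul_prod_erase (Finset.univ.erase i.castSucc)
        (fun j => z ((j : ℕ) + 1) ^ Q j)
        (Finset.mem_erase.mpr ⟨hne.symm, Finset.mem_univ _⟩), hQis]
      simp only [Fin.val_succ]
      congr 1
      exact Finset.prod_congr rfl fun j hj => by rw [hQee j hj]
    rw [Cp, Cp, hwp, hwq, hmonp, hfp, hgp, hfq, hgq, hprodQ, hQic]
    simp only [Fin.val_succ, Fin.coe_castSucc, Nat.add_sub_cancel]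
    have hl1 : ((l : ℝ) + 1) ≠ 0 := by positivity
    have hx : (((i : ℕ) : ℝ) + 1) ≠ 0 := by positivity
    have hy : (((i : ℕ) : ℝ) + 2) ≠ 0 := by positivity
    have hrf : (r.factorial : ℝ) ≠ 0 := by positivity
    have hmf : ((p i.castSucc).factorial : ℝ) ≠ 0 := by positivity
    have hlf : (l.factorial : ℝ) ≠ 0 := by positivity
    simp only [Nat.factorial_succ, pow_succ, pow_add]
    push_cast
    field_simp

lemma partB (n l : ℕ) (h : l ≤ n) (z : ℕ → ℝ) :
    ∑ p ∈ PSet (n+1) (l+1), (∑ i : Fin n,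
        ((((i : ℕ) : ℝ) + 2) * (p i.succ : ℝ) / ((l : ℝ) + 1)) * (Cp (l+1) p * mon p z))
      = Dalg (n+1) l z := by
  rw [Dalg]
  have hR : ∀ p ∈ PSet (n+1) l,
      Cp l p * ∑ i : Fin (n+1), (∏ j ∈ Finset.univ.erase i, z ((j : ℕ) + 1) ^ p j) *
        ((p i : ℝ) * z ((i : ℕ) + 1) ^ (p i - 1) * ((((i : ℕ) : ℝ) + 1) * z ((i : ℕ) + 2)))
      = ∑ i : Fin n, Cp l p *
          ((∏ j ∈ Finset.univ.erase i.castSucc, z ((j : ℕ) + 1) ^ p j) *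
            ((p i.castSucc : ℝ) * z ((i.castSucc : ℕ) + 1) ^ (p i.castSucc - 1) *
              ((((i.castSucc : ℕ) : ℝ) + 1) * z ((i.castSucc : ℕ) + 2)))) := by
    intro p hp
    have hlast : p (Fin.last n) = 0 := PSet_zero hp (by simp; omega)
    rw [Fin.sum_univ_castSucc]
    simp only [hlast]
    norm_num
    rw [Finset.mul_sum]
  rw [Finset.sum_congr rfl hR]
  rw [Finset.sum_comm]
  exact (Finset.sum_congr rfl fun i _ => keyB n l h z i).trans Finset.sum_comm

lemma recur (n l : ℕ) (h : l ≤ n) (z : ℕ → ℝ) :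
    LP (n+1) (l+1) z = -(1/2) * z 1 * LP (n+1) l z + Dalg (n+1) l z := by
  have key : ∀ p ∈ PSet (n+1) (l+1), Cp (l+1) p * mon p z
      = ((p 0 : ℝ) / ((l : ℝ) + 1)) * (Cp (l+1) p * mon p z)
        + ∑ i : Fin n, ((((i : ℕ) : ℝ) + 2) * (p i.succ : ℝ) / ((l : ℝ) + 1))
            * (Cp (l+1) p * mon p z) := by
    intro p hp
    have hdegn := mem_PSet.mp hp
    have hdeg : (∑ j : Fin (n+1), (((j : ℕ) : ℝ) + 1) * (p j : ℝ)) = (l : ℝ) + 1 := by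
      have : ((∑ j : Fin (n+1), ((j : ℕ) + 1) * p j : ℕ) : ℝ) = ((l + 1 : ℕ) : ℝ) := by
        exact_mod_cast hdegn
      push_cast at this
      simpa using this
    rw [Fin.sum_univ_succ] at hdeg
    have hc : ((p 0 : ℝ) / ((l : ℝ) + 1))
        + ∑ i : Fin n, ((((i : ℕ) : ℝ) + 2) * (p i.succ : ℝ) / ((l : ℝ) + 1)) = 1 := by
      rw [← Finset.sum_div, ← add_div, div_eq_one_iff_eq (by positivity), ← hdeg]
      congr 1
      · simp
      · exact Finset.sum_congr rfl fun i _ => by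
          simp only [Fin.val_succ]; push_cast; ring
    calc Cp (l+1) p * mon p z = (((p 0 : ℝ) / ((l : ℝ) + 1))
          + ∑ i : Fin n, ((((i : ℕ) : ℝ) + 2) * (p i.succ : ℝ) / ((l : ℝ) + 1)))
            * (Cp (l+1) p * mon p z) := by rw [hc, one_mul]
    _ = _ := by rw [add_mul, Finset.sum_mul]
  rw [LP, Finset.sum_congr rfl key, Finset.sum_add_distrib, partA n l z, partB n l h z]

lemma LPoly_zero (z : ℕ → ℝ) : LPoly 0 z = 1 := by
  rw [LPoly_eq_LP, LP]
  rw [show PSet 0 0 = {fun i : Fin 0 => i.elim0} from by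
    apply Finset.eq_singleton_iff_unique_mem.mpr
    constructor
    · rw [mem_PSet]; simp
    · intro p _; funext i; exact i.elim0]
  simp [Cp, mon]

lemma hasDerivAt_S (M : ℕ) (a : Fin M → ℝ) (t : ℝ) (hat : ∀ j, a j - t ≠ 0) (k : ℕ) :
    HasDerivAt (fun u => ∑ j : Fin M, 1 / (a j - u) ^ k)
      ((k : ℝ) * ∑ j : Fin M, 1 / (a j - t) ^ (k + 1)) t := by
  rw [Finset.mul_sum]
  apply HasDerivAt.fun_sum
  intro j _
  have h1 : HasDerivAt (fun u => a j - u) (-1) t := by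
    simpa using (hasDerivAt_id t).const_sub (a j)
  have h2 := (h1.fun_pow k).fun_inv (pow_ne_zero k (hat j))
  have h3 : HasDerivAt (fun u => 1 / (a j - u) ^ k)
      (-((k : ℝ) * (a j - t) ^ (k - 1) * (-1)) / ((a j - t) ^ k) ^ 2) t := by
    simpa only [one_div] using h2
  refine h3.congr_deriv (Eq.symm ?_)
  rcases k with _ | m
  · simp
  · have hne := hat j
    simp only [Nat.add_sub_cancel]
    field_simp
    ring

lemma hasDerivAt_g (M : ℕ) (a : Fin M → ℝ) (t : ℝ) (hpos : 0 < ∏ j : Fin M, (t - a j)) :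
    HasDerivAt (fun u => Real.sqrt (∏ j : Fin M, (u - a j)))
      (Real.sqrt (∏ j : Fin M, (t - a j)) * (-(1/2) * ∑ j : Fin M, 1 / (a j - t) ^ 1)) t := by
  have hne : ∀ j : Fin M, t - a j ≠ 0 :=
    fun j => Finset.prod_ne_zero_iff.mp hpos.ne' j (Finset.mem_univ j)
  have hf : HasDerivAt (fun u => ∏ j : Fin M, (u - a j))
      (∑ j : Fin M, ∏ k ∈ Finset.univ.erase j, (t - a k)) t := by
    have h0 := HasDerivAt.fun_finsetProd (u := Finset.univ)
      (f := fun (j : Fin M) u => u - a j) (f' := fun _ => 1)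
      (fun j _ => (hasDerivAt_id t).sub_const (a j))
    simpa using h0
  have hsq := hf.sqrt hpos.ne'
  convert hsq using 1
  have hsum : ∑ j : Fin M, ∏ k ∈ Finset.univ.erase j, (t - a k)
      = (∏ j : Fin M, (t - a j)) * ∑ j : Fin M, (t - a j)⁻¹ := by
    rw [Finset.mul_sum]
    refine Finset.sum_congr rfl fun j _ => ?_
    rw [← Finset.mul_prod_erase Finset.univ _ (Finset.mem_univ j)]
    rw [mul_comm (t - a j), mul_assoc, mul_inv_cancel₀ (hne j), mul_one]
  rw [hsum]
  have hterm : ∑ j : Fin M, 1 / (a j - t) ^ 1 = - ∑ j : Fin M, (t - a j)⁻¹ := by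
    rw [← Finset.sum_neg_distrib]
    refine Finset.sum_congr rfl fun j _ => ?_
    rw [pow_one, one_div, show a j - t = -(t - a j) by ring, inv_neg]
  rw [hterm]
  have hss : Real.sqrt (∏ j : Fin M, (t - a j)) * Real.sqrt (∏ j : Fin M, (t - a j))
      = ∏ j : Fin M, (t - a j) := Real.mul_self_sqrt hpos.le
  have hsqne : Real.sqrt (∏ j : Fin M, (t - a j)) ≠ 0 :=
    ne_of_gt (Real.sqrt_pos.mpr hpos)
  rw [eq_div_iff (mul_ne_zero two_ne_zero hsqne)]
  have hre : Real.sqrt (∏ j : Fin M, (t - a j)) * (-(1/2) * - ∑ j : Fin M, (t - a j)⁻¹)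
      * (2 * Real.sqrt (∏ j : Fin M, (t - a j)))
      = (Real.sqrt (∏ j : Fin M, (t - a j)) * Real.sqrt (∏ j : Fin M, (t - a j)))
        * ∑ j : Fin M, (t - a j)⁻¹ := by ring
  rw [hre, hss]

lemma hasDerivAt_LP (M N l : ℕ) (a : Fin M → ℝ) (t : ℝ) (hat : ∀ j, a j - t ≠ 0) :
    HasDerivAt (fun u => LP N l (fun k => ∑ j : Fin M, 1 / (a j - u) ^ k))
      (Dalg N l (fun k => ∑ j : Fin M, 1 / (a j - t) ^ k)) t := by
  unfold LP Dalg
  apply HasDerivAt.fun_sum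
  intro p _
  apply HasDerivAt.const_mul
  unfold mon
  have h0 := HasDerivAt.fun_finsetProd (u := Finset.univ)
    (f := fun (i : Fin N) u => (∑ j : Fin M, 1 / (a j - u) ^ ((i : ℕ) + 1)) ^ p i)
    (f' := fun i => (p i : ℝ) * (∑ j : Fin M, 1 / (a j - t) ^ ((i : ℕ) + 1)) ^ (p i - 1) *
      ((((i : ℕ) : ℝ) + 1) * ∑ j : Fin M, 1 / (a j - t) ^ ((i : ℕ) + 2)))
    (fun i _ => by
      have hk := (hasDerivAt_S M a t hat ((i : ℕ) + 1)).fun_pow (p i)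
      convert hk using 1
      push_cast
      ring)
  simpa [smul_eq_mul] using h0

end Stmt11

open Stmt11 in
theorem stmt11 (M : ℕ) (a : Fin M → ℝ) (s : Set ℝ) (hs : IsOpen s)
    (hpos : ∀ t ∈ s, 0 < ∏ j : Fin M, (t - a j))
    (y₀ : ℝ) (hy₀ : y₀ ∈ s) (ha : ∀ j, a j ≠ y₀) (l : ℕ) :
    iteratedDeriv l (fun t => Real.sqrt (∏ j : Fin M, (t - a j))) y₀ =
      Real.sqrt (∏ j : Fin M, (y₀ - a j)) *
        LPoly l (fun k => ∑ j : Fin M, 1 / (a j - y₀) ^ k) := by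
  have hat : ∀ t ∈ s, ∀ j, a j - t ≠ 0 := by
    intro t ht j
    have h1 : t - a j ≠ 0 := Finset.prod_ne_zero_iff.mp (hpos t ht).ne' j (Finset.mem_univ j)
    intro h0; apply h1; linarith
  suffices H : ∀ t ∈ s, iteratedDeriv l (fun t => Real.sqrt (∏ j : Fin M, (t - a j))) t
      = Real.sqrt (∏ j : Fin M, (t - a j)) * LPoly l (fun k => ∑ j : Fin M, 1 / (a j - t) ^ k) from
    H y₀ hy₀
  induction l with
  | zero =>
    intro t ht
    rw [iteratedDeriv_zero, LPoly_zero, mul_one]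
  | succ l ih =>
    intro t ht
    rw [iteratedDeriv_succ]
    have hev : iteratedDeriv l (fun t => Real.sqrt (∏ j : Fin M, (t - a j)))
        =ᶠ[nhds t] fun u => Real.sqrt (∏ j : Fin M, (u - a j))
          * LP (l+2) l (fun k => ∑ j : Fin M, 1 / (a j - u) ^ k) := by
      filter_upwards [hs.mem_nhds ht] with u hu
      rw [ih u hu, LPoly_eq_LP, ← LP_stable (l+2) l (by omega)]
    rw [hev.deriv_eq]
    have hd := (hasDerivAt_g M a t (hpos t ht)).fun_mul (hasDerivAt_LP M (l+2) l a t (hat t ht))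
    rw [hd.deriv]
    rw [LPoly_eq_LP, ← LP_stable (l+2) (l+1) (by omega), recur (l+1) l (by omega)]
    ring
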